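/- Let λ > 0 and 0 < p ≤ 1. Then ∫₀^∞ e^{-t} · ( ∑_{j=1}^∞ e^{-λt} (1-e^{-λt})^{j-1} (1-p)^j ) dt = ((1-p)/(λ+1)) · ∑_{k=0}^∞ k! (1-p)^k / ((2+1/λ)_k), where (a)_k = a(a+1)⋯(a+k-1) is the Pochhammer symbol (with (a)_0 = 1). (The right-hand side equals ((1-p)/(λ+1)) · ₂F₁(1,1; 2+1/λ; 1-p); this is the probability that no individual survives the collapse in the Yule growth with binomial catastrophe scheme.) -/

import Mathlib

open MeasureTheory Real

section aux

lemma yb_integrable (l a : ℝ) (hl : 0 < l) (ha : 0 < a) (k : ℕ) :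
    IntegrableOn (fun t : ℝ => Real.exp (-(a*t)) * (1 - Real.exp (-(l*t)))^k)
      (Set.Ioi (0:ℝ)) := by
  have hexp : IntegrableOn (fun t : ℝ => Real.exp (-a*t)) (Set.Ioi (0:ℝ)) :=
    exp_neg_integrableOn_Ioi 0 ha
  refine Integrable.mono' hexp ?_ ?_
  · exact (Continuous.aestronglyMeasurable (by continuity)).restrict
  · refine (MeasureTheory.ae_restrict_iff' measurableSet_Ioi).2 ?_
    refine Filter.Eventually.of_forall fun t ht => ?_
    have ht0 : (0:ℝ) < t := ht
    have h1 : Real.exp (-(l*t)) ≤ 1 := by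
      apply Real.exp_le_one_iff.2; nlinarith
    have h0 : 0 ≤ 1 - Real.exp (-(l*t)) := by linarith
    have h2 : (1 - Real.exp (-(l*t)))^k ≤ 1 :=
      pow_le_one₀ h0 (by linarith [(Real.exp_pos (-(l*t))).le])
    rw [Real.norm_eq_abs, abs_of_nonneg (by positivity)]
    calc Real.exp (-(a*t)) * (1 - Real.exp (-(l*t)))^k
        ≤ Real.exp (-(a*t)) * 1 :=
          mul_le_mul_of_nonneg_left h2 (le_of_lt (Real.exp_pos _))
      _ = Real.exp (-a*t) := by rw [mul_one, neg_mul]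

lemma yb_tendsto (a : ℝ) (ha : 0 < a) :
    Filter.Tendsto (fun t : ℝ => Real.exp (-(a*t))) Filter.atTop (nhds 0) := by
  have h1 : Filter.Tendsto (fun t : ℝ => a * t) Filter.atTop Filter.atTop :=
    Filter.Tendsto.const_mul_atTop ha Filter.tendsto_id
  exact Real.tendsto_exp_neg_atTop_nhds_zero.comp h1

lemma yb_int_exp (a : ℝ) (ha : 0 < a) :
    ∫ t in Set.Ioi (0:ℝ), Real.exp (-(a*t)) = 1/a := by
  have h := integral_Ioi_of_hasDerivAt_of_tendsto'
    (f := fun t : ℝ => -Real.exp (-(a*t))/a) (f' := fun t : ℝ => Real.exp (-(a*t)))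
    (a := 0) (m := 0) ?_ ?_ ?_
  · rw [h]; simp [Real.exp_zero]; ring
  · intro x _
    have hd : HasDerivAt (fun t : ℝ => Real.exp (-(a*t))) (Real.exp (-(a*x)) * (-a)) x := by
      have h1 : HasDerivAt (fun t : ℝ => -(a*t)) (-a) x := by
        exact (((hasDerivAt_id' x).const_mul a).neg).congr_deriv (by ring)
      exact (Real.hasDerivAt_exp _).comp x h1
    have := (hd.neg).div_const a
    exact this.congr_deriv (by rw [mul_neg, neg_neg, mul_div_assoc, div_self ha.ne', mul_one])
  · simpa [neg_mul] using exp_neg_integrableOn_Ioi (0:ℝ) ha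
  · have := ((yb_tendsto a ha).neg).div_const a
    simpa using this

lemma yb_main_int (l : ℝ) (hl : 0 < l) :
    ∀ k : ℕ, ∀ a : ℝ, 0 < a →
      ∫ t in Set.Ioi (0:ℝ), Real.exp (-(a*t)) * (1 - Real.exp (-(l*t)))^k
        = (Nat.factorial k : ℝ) * l^k / ∏ j ∈ Finset.range (k+1), (a + j*l) := by
  intro k
  induction k with
  | zero =>
    intro a ha
    simp only [pow_zero, mul_one, Nat.factorial_zero]
    rw [yb_int_exp a ha]
    simp
  | succ k ih =>
    intro a ha
    have hal : 0 < a + l := by linarith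
    have key : ∀ t : ℝ,
        Real.exp (-(a*t)) * (1 - Real.exp (-(l*t)))^(k+1)
        = Real.exp (-(a*t)) * (1 - Real.exp (-(l*t)))^k
          - Real.exp (-((a+l)*t)) * (1 - Real.exp (-(l*t)))^k := by
      intro t
      have : Real.exp (-((a+l)*t)) = Real.exp (-(a*t)) * Real.exp (-(l*t)) := by
        rw [← Real.exp_add]; ring_nf
      rw [this, pow_succ]
      ring
    rw [MeasureTheory.setIntegral_congr_fun measurableSet_Ioi (fun t _ => key t)]
    rw [MeasureTheory.integral_sub (yb_integrable l a hl ha k)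
      (yb_integrable l (a+l) hl hal k)]
    rw [ih a ha, ih (a+l) hal]
    have hP : ∀ (b : ℝ), 0 < b → (0:ℝ) < ∏ j ∈ Finset.range (k+1), (b + j*l) := by
      intro b hb
      apply Finset.prod_pos
      intro j _
      have : (0:ℝ) ≤ j := Nat.cast_nonneg j
      nlinarith
    have hPa := hP a ha
    have hPal := hP (a+l) hal
    have hshift : ∏ j ∈ Finset.range (k+1), ((a+l) + j*l)
        = ∏ j ∈ Finset.range (k+1), (a + ((j:ℝ)+1)*l) :=
      Finset.prod_congr rfl (fun j _ => by ring)
    have hsplit1 : ∏ j ∈ Finset.range (k+2), (a + j*l)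
        = a * ∏ j ∈ Finset.range (k+1), (a + ((j:ℝ)+1)*l) := by
      rw [Finset.prod_range_succ' (fun j => a + (j:ℝ)*l) (k+1)]
      push_cast
      ring
    have hsplit2 : ∏ j ∈ Finset.range (k+2), (a + j*l)
        = (∏ j ∈ Finset.range (k+1), (a + j*l)) * (a + ((k:ℝ)+1)*l) := by
      rw [Finset.prod_range_succ]; push_cast; ring
    have hkey : a * ∏ j ∈ Finset.range (k+1), ((a+l) + j*l)
        = (∏ j ∈ Finset.range (k+1), (a + j*l)) * (a + ((k:ℝ)+1)*l) := by
      rw [hshift, ← hsplit1, hsplit2]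
    rw [hsplit2]
    have hc : (0:ℝ) < a + ((k:ℝ)+1)*l := by positivity
    rw [div_sub_div _ _ hPa.ne' hPal.ne', div_eq_div_iff (by positivity) (by positivity)]
    push_cast [Nat.factorial_succ]
    linear_combination ((Nat.factorial k : ℝ) * l^k *
      (∏ j ∈ Finset.range (k+1), (a + j*l))) * hkey

lemma yb_poch (l : ℝ) (hl : 0 < l) (k : ℕ) :
    ∏ j ∈ Finset.range (k+1), ((1+l) + j*l)
      = (l+1) * l^k * (ascPochhammer ℝ k).eval (2 + 1/l) := by
  induction k with
  | zero => simp; ring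
  | succ k ih =>
    rw [Finset.prod_range_succ, ih, ascPochhammer_succ_eval]
    have hll : l * (2 + 1/l + k) = 1 + ((k:ℝ)+1)*l + l := by
      field_simp; ring
    push_cast
    linear_combination (-((l+1) * l^k * (ascPochhammer ℝ k).eval (2+1/l))) * hll

lemma yb_poch_pos (l : ℝ) (hl : 0 < l) (k : ℕ) :
    (0:ℝ) < (ascPochhammer ℝ k).eval (2 + 1/l) := by
  induction k with
  | zero => simp
  | succ k ih =>
    rw [ascPochhammer_succ_eval]
    have h1 : (0:ℝ) < 2 + 1/l + k := by positivity
    positivity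

end aux

/-- Probability that no individual survives the collapse in the Yule growth
(rate `l`) with binomial catastrophe (parameter `p`) scheme, expressed via the
hypergeometric series `₂F₁(1,1;2+1/λ;1-p)` written with Pochhammer symbols.
The sum over `j ≥ 1` is written by reindexing `j = k + 1`. -/
theorem yule_binomial_no_survivor (l p : ℝ) (hl : 0 < l) (hp0 : 0 < p) (hp1 : p ≤ 1) :
    ∫ t in Set.Ioi (0:ℝ), Real.exp (-t) *
      ∑' k : ℕ, Real.exp (-(l * t)) * (1 - Real.exp (-(l * t))) ^ k * (1 - p) ^ (k + 1)
      = ((1 - p) / (l + 1)) *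
        ∑' k : ℕ, (Nat.factorial k : ℝ) * (1 - p) ^ k /
          (ascPochhammer ℝ k).eval (2 + 1 / l) := by
  have hq0 : (0:ℝ) ≤ 1 - p := by linarith
  have hq1 : 1 - p < 1 := by linarith
  have h1l : (0:ℝ) < 1 + l := by linarith
  set q : ℝ := 1 - p with hq
  set F : ℕ → ℝ → ℝ := fun k t =>
    Real.exp (-t) * (Real.exp (-(l * t)) * (1 - Real.exp (-(l * t))) ^ k * q ^ (k + 1))
    with hF
  have hFeq : ∀ k, F k = fun t =>
      q ^ (k+1) * (Real.exp (-((1+l)*t)) * (1 - Real.exp (-(l*t)))^k) := by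
    intro k
    funext t
    have h : Real.exp (-((1+l)*t)) = Real.exp (-t) * Real.exp (-(l*t)) := by
      rw [← Real.exp_add]; ring_nf
    rw [hF]
    simp only [h]
    ring
  have hIntF : ∀ k, Integrable (F k) (volume.restrict (Set.Ioi (0:ℝ))) := by
    intro k
    rw [hFeq k]
    exact ((yb_integrable l (1+l) hl h1l k).const_mul _)
  have hIntG : ∀ k : ℕ, IntegrableOn
      (fun t : ℝ => q^(k+1) * Real.exp (-((1+l)*t))) (Set.Ioi (0:ℝ)) := by
    intro k
    have h0 : IntegrableOn (fun t : ℝ => Real.exp (-(1+l)*t)) (Set.Ioi (0:ℝ)) :=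
      exp_neg_integrableOn_Ioi 0 h1l
    have h1 := h0.const_mul (q^(k+1))
    simp only [neg_mul] at h1
    exact h1
  have hbound : ∀ k : ℕ, (∫ t in Set.Ioi (0:ℝ), ‖F k t‖) ≤ q^(k+1) * (1/(1+l)) := by
    intro k
    have hmono := setIntegral_mono_on ((hIntF k).norm)
      (hIntG k) measurableSet_Ioi (fun t ht => ?_)
    · calc (∫ t in Set.Ioi (0:ℝ), ‖F k t‖)
          ≤ ∫ t in Set.Ioi (0:ℝ), q^(k+1) * Real.exp (-((1+l)*t)) := hmono
        _ = q^(k+1) * (1/(1+l)) := by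
            rw [MeasureTheory.integral_const_mul, yb_int_exp (1+l) h1l]
    · have ht0 : (0:ℝ) < t := ht
      have he1 : Real.exp (-(l*t)) ≤ 1 := by
        apply Real.exp_le_one_iff.2; nlinarith
      have he0 : (0:ℝ) ≤ 1 - Real.exp (-(l*t)) := by linarith
      have h2 : (1 - Real.exp (-(l*t)))^k ≤ 1 :=
        pow_le_one₀ he0 (by linarith [(Real.exp_pos (-(l*t))).le])
      have h2' : (0:ℝ) ≤ (1 - Real.exp (-(l*t)))^k := pow_nonneg he0 k
      have hqk : (0:ℝ) ≤ q^(k+1) := pow_nonneg hq0 _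
      have hprod : Real.exp (-((1+l)*t)) = Real.exp (-t) * Real.exp (-(l*t)) := by
        rw [← Real.exp_add]; ring_nf
      rw [hF]
      simp only
      rw [Real.norm_eq_abs, abs_of_nonneg (by positivity), hprod]
      have hpos : (0:ℝ) ≤ Real.exp (-t) * Real.exp (-(l*t)) * q^(k+1) := by positivity
      nlinarith [mul_le_mul_of_nonneg_left h2 hpos]
  have hSum : Summable (fun k : ℕ => ∫ t in Set.Ioi (0:ℝ), ‖F k t‖) := by
    apply Summable.of_nonneg_of_le
      (fun k => MeasureTheory.integral_nonneg (fun t => norm_nonneg _)) hbound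
    have : Summable (fun k : ℕ => (q * (1/(1+l))) * q^k) :=
      (summable_geometric_of_lt_one hq0 hq1).mul_left _
    apply this.congr
    intro k
    ring
  have hswap := MeasureTheory.integral_tsum_of_summable_integral_norm hIntF hSum
  have hLHS : (∫ t in Set.Ioi (0:ℝ), Real.exp (-t) *
      ∑' k : ℕ, Real.exp (-(l * t)) * (1 - Real.exp (-(l * t))) ^ k * q ^ (k + 1))
      = ∫ t in Set.Ioi (0:ℝ), ∑' k : ℕ, F k t := by
    apply MeasureTheory.setIntegral_congr_fun measurableSet_Ioi
    intro t _
    simp only [hF]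
    exact (tsum_mul_left).symm
  rw [hLHS, ← hswap]
  rw [show ((1 - p) / (l + 1)) *
        ∑' k : ℕ, (Nat.factorial k : ℝ) * (1 - p) ^ k /
          (ascPochhammer ℝ k).eval (2 + 1 / l)
      = ∑' k : ℕ, (q / (l + 1)) * ((Nat.factorial k : ℝ) * q ^ k /
          (ascPochhammer ℝ k).eval (2 + 1 / l)) from (tsum_mul_left).symm]
  apply tsum_congr
  intro k
  have hcomp : (∫ t in Set.Ioi (0:ℝ), F k t)
      = q^(k+1) * ((Nat.factorial k : ℝ) * l^k
          / ∏ j ∈ Finset.range (k+1), ((1+l) + j*l)) := by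
    rw [hFeq k, MeasureTheory.integral_const_mul, yb_main_int l hl k (1+l) h1l]
  rw [hcomp, yb_poch l hl k]
  have hE := yb_poch_pos l hl k
  set E : ℝ := (ascPochhammer ℝ k).eval (2 + 1/l) with hEdef
  have hl' : l ≠ 0 := hl.ne'
  have hl1 : l + 1 ≠ 0 := by positivity
  have hE' : E ≠ 0 := hE.ne'
  have hlk : l^k ≠ 0 := pow_ne_zero k hl'
  field_simp
  ring
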